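/- Let n ≥ 1. The second moment of the complex equatorial stabilizer ensemble satisfies (1/|𝒜ₙ|) Σ_{A ∈ 𝒜ₙ} (φ^{eq}_A (φ^{eq}_A)†)^{⊗2} = (1/4ⁿ) ( I + Σ_{x,y ∈ {0,1}ⁿ} |x y⟩⟨y x| − Σ_{x ∈ {0,1}ⁿ} |x x⟩⟨x x| ), an identity of 4ⁿ×4ⁿ matrices indexed by pairs of bit strings. -/

import Mathlib

open Finset Matrix

/-- Bit strings of length `n`, with entries viewed as `0/1` integers via `Fin 2`. -/
abbrev Bits (n : ℕ) := Fin n → Fin 2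

open Classical in
/-- The index set `𝒜ₙ`: symmetric `n × n` matrices with diagonal entries in `{0,1,2,3}`
and off-diagonal entries in `{0,1}` (encoded inside `Fin 4`). -/
noncomputable def An (n : ℕ) : Finset (Matrix (Fin n) (Fin n) (Fin 4)) :=
  Finset.univ.filter fun A => (∀ i j, A i j = A j i) ∧ ∀ i j, i ≠ j → (A i j : ℕ) < 2

/-- The quadratic form `xᵀ A x`, computed in `ℤ` (here in `ℕ`, with `0/1` entries of `x`). -/
def quadA {n : ℕ} (A : Matrix (Fin n) (Fin n) (Fin 4)) (x : Bits n) : ℕ :=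
  ∑ i, ∑ j, (A i j : ℕ) * (x i : ℕ) * (x j : ℕ)

/-- The complex equatorial stabilizer state `φ^{eq}_A`. -/
noncomputable def phiEq {n : ℕ} (A : Matrix (Fin n) (Fin n) (Fin 4)) (x : Bits n) : ℂ :=
  Complex.I ^ quadA A x / (Real.sqrt (2 ^ n) : ℂ)

/-- The rank-one projector `φ φ†` onto a vector `φ`. -/
noncomputable def outer {ι : Type*} (φ : ι → ℂ) : Matrix ι ι ℂ :=
  Matrix.of fun x y => φ x * (starRingEnd ℂ) (φ y)

/-- The Kronecker (tensor) square of a matrix, indexed by pairs. -/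
def kron2 {ι : Type*} (M : Matrix ι ι ℂ) : Matrix (ι × ι) (ι × ι) ℂ :=
  Matrix.of fun p q => M p.1 q.1 * M p.2 q.2

namespace Espovm

/-- ordered pairs `i < j` -/
abbrev Pr (n : ℕ) := {p : Fin n × Fin n // p.1 < p.2}

variable {n : ℕ}

/-- Build a matrix in `An n` from a diagonal and strict-upper-triangular data. -/
def toMat (n : ℕ) (d : Fin n → Fin 4) (u : Pr n → Fin 2) : Matrix (Fin n) (Fin n) (Fin 4) :=
  Matrix.of fun i j =>
    if h : i < j then Fin.castLE (by norm_num) (u ⟨(i, j), h⟩)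
    else if h' : j < i then Fin.castLE (by norm_num) (u ⟨(j, i), h'⟩)
    else d i

lemma toMat_diag (d : Fin n → Fin 4) (u : Pr n → Fin 2) (i : Fin n) :
    toMat n d u i i = d i := by
  simp [toMat]

lemma toMat_lt (d : Fin n → Fin 4) (u : Pr n → Fin 2) {i j : Fin n} (h : i < j) :
    toMat n d u i j = Fin.castLE (by norm_num) (u ⟨(i, j), h⟩) := by
  simp [toMat, h]

lemma toMat_gt (d : Fin n → Fin 4) (u : Pr n → Fin 2) {i j : Fin n} (h : j < i) :
    toMat n d u i j = Fin.castLE (by norm_num) (u ⟨(j, i), h⟩) := by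
  simp [toMat, h, not_lt_of_gt h]

lemma toMat_mem (d : Fin n → Fin 4) (u : Pr n → Fin 2) : toMat n d u ∈ An n := by
  simp only [An, mem_filter, mem_univ, true_and]
  constructor
  · intro i j
    rcases lt_trichotomy i j with h | h | h
    · rw [toMat_lt d u h, toMat_gt d u h]
    · subst h; rfl
    · rw [toMat_gt d u h, toMat_lt d u h]
  · intro i j hij
    rcases hij.lt_or_gt with h | h
    · rw [toMat_lt d u h, Fin.coe_castLE]; exact (u _).isLt
    · rw [toMat_gt d u h, Fin.coe_castLE]; exact (u _).isLt

/-- Inverse of `toMat`. -/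
def fromMat (A : Matrix (Fin n) (Fin n) (Fin 4)) : (Fin n → Fin 4) × (Pr n → Fin 2) :=
  (fun i => A i i,
   fun p => if h : (A p.1.1 p.1.2 : ℕ) < 2 then ⟨(A p.1.1 p.1.2 : ℕ), h⟩ else 0)

lemma toMat_fromMat {A : Matrix (Fin n) (Fin n) (Fin 4)} (hA : A ∈ An n) :
    toMat n (fromMat A).1 (fromMat A).2 = A := by
  simp only [An, mem_filter, mem_univ, true_and] at hA
  obtain ⟨hsym, hoff⟩ := hA
  ext i j
  rcases lt_trichotomy i j with h | h | h
  · have h2 : (A i j : ℕ) < 2 := hoff i j (ne_of_lt h)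
    rw [toMat_lt _ _ h, Fin.coe_castLE]
    simp only [fromMat]
    rw [dif_pos h2]
  · subst h
    rw [toMat_diag]
    rfl
  · have h2 : (A j i : ℕ) < 2 := hoff j i (ne_of_lt h)
    rw [toMat_gt _ _ h, Fin.coe_castLE]
    simp only [fromMat]
    rw [dif_pos h2]
    show ((A j i : ℕ)) = ((A i j : ℕ))
    rw [hsym i j]

lemma fromMat_toMat (d : Fin n → Fin 4) (u : Pr n → Fin 2) :
    fromMat (toMat n d u) = (d, u) := by
  refine Prod.ext (funext fun i => ?_) (funext fun p => ?_)
  · simp [fromMat, toMat_diag]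
  · obtain ⟨⟨i, j⟩, h⟩ := p
    have he : toMat n d u i j = Fin.castLE (by norm_num) (u ⟨(i, j), h⟩) := toMat_lt d u h
    simp only [fromMat, he, Fin.coe_castLE]
    rw [dif_pos (u _).isLt]

lemma sum_An (F : Matrix (Fin n) (Fin n) (Fin 4) → ℂ) :
    ∑ A ∈ An n, F A = ∑ d : Fin n → Fin 4, ∑ u : Pr n → Fin 2, F (toMat n d u) := by
  rw [← Fintype.sum_prod_type']
  exact Finset.sum_nbij' (fun A => fromMat A) (fun du => toMat n du.1 du.2)
    (fun A _ => mem_univ _) (fun du _ => toMat_mem du.1 du.2)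
    (fun A hA => toMat_fromMat hA) (fun du _ => fromMat_toMat du.1 du.2)
    (fun A hA => (congrArg F (toMat_fromMat hA)).symm)

lemma card_An : ((An n).card : ℂ) = 4 ^ n * 2 ^ Fintype.card (Pr n) := by
  have h := sum_An (n := n) (fun _ => (1 : ℂ))
  simp only [Finset.sum_const, nsmul_eq_mul, mul_one, Finset.card_univ] at h
  rw [h]
  simp only [Fintype.card_fun, Fintype.card_fin]
  push_cast
  ring

lemma quadA_toMat (d : Fin n → Fin 4) (u : Pr n → Fin 2) (x : Bits n) :
    quadA (toMat n d u) x
      = (∑ i, (d i : ℕ) * ((x i : ℕ) * (x i : ℕ)))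
        + 2 * ∑ p : Pr n, (u p : ℕ) * ((x p.1.1 : ℕ) * (x p.1.2 : ℕ)) := by
  classical
  have key : ∀ f : Fin n → Fin n → ℕ,
      (∑ i, ∑ j, f i j)
        = (∑ i, f i i) + (∑ p : Pr n, f p.1.1 p.1.2) + (∑ p : Pr n, f p.1.2 p.1.1) := by
    intro f
    rw [← Finset.sum_product' (s := univ) (t := univ), Finset.univ_product_univ]
    rw [← Finset.sum_filter_add_sum_filter_not (univ : Finset (Fin n × Fin n))
      (fun p => p.1 < p.2)]
    rw [← Finset.sum_filter_add_sum_filter_not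
      ((univ : Finset (Fin n × Fin n)).filter (fun p => ¬ p.1 < p.2)) (fun p => p.2 < p.1)]
    rw [Finset.filter_filter, Finset.filter_filter]
    have e1 : ∑ p ∈ univ.filter (fun p : Fin n × Fin n => p.1 < p.2), f p.1 p.2
        = ∑ p : Pr n, f p.1.1 p.1.2 :=
      Finset.sum_subtype _ (by simp) _
    have e2 : ∑ p ∈ univ.filter (fun p : Fin n × Fin n => ¬ p.1 < p.2 ∧ p.2 < p.1), f p.1 p.2
        = ∑ p : Pr n, f p.1.2 p.1.1 := by
      rw [Finset.sum_nbij' (i := fun p : Fin n × Fin n => p.swap) (j := fun p => p.swap)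
        (t := univ.filter (fun p : Fin n × Fin n => p.1 < p.2))
        (g := fun p => f p.2 p.1)]
      · exact Finset.sum_subtype _ (by simp) _
      · intro a ha; simp only [Finset.mem_filter, Finset.mem_univ, true_and] at ha ⊢
        exact ha.2
      · intro a ha; simp only [Finset.mem_filter, Finset.mem_univ, true_and] at ha ⊢
        exact ⟨not_lt_of_gt ha, ha⟩
      · intro a _; simp
      · intro a _; simp
      · intro a _; rfl
    have e3 : ∑ p ∈ univ.filter (fun p : Fin n × Fin n => ¬ p.1 < p.2 ∧ ¬ p.2 < p.1), f p.1 p.2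
        = ∑ i, f i i := by
      rw [Finset.sum_nbij' (i := fun p : Fin n × Fin n => p.1) (j := fun i => (i, i))
        (t := univ) (g := fun i => f i i)]
      · intro a _; exact mem_univ _
      · intro a _; simp
      · intro a ha
        simp only [Finset.mem_filter, Finset.mem_univ, true_and, not_lt] at ha
        have h12 : a.1 = a.2 := le_antisymm ha.2 ha.1
        rw [Prod.ext_iff]; exact ⟨rfl, h12⟩
      · intro a _; rfl
      · intro a ha
        simp only [Finset.mem_filter, Finset.mem_univ, true_and, not_lt] at ha
        have h12 : a.1 = a.2 := le_antisymm ha.2 ha.1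
        rw [← h12]
    rw [e1, e2, e3]
    ring
  unfold quadA
  rw [key (fun i j => (toMat n d u i j : ℕ) * (x i : ℕ) * (x j : ℕ))]
  have hd : ∀ i : Fin n, (toMat n d u i i : ℕ) * (x i : ℕ) * (x i : ℕ)
      = (d i : ℕ) * ((x i : ℕ) * (x i : ℕ)) := by
    intro i; rw [toMat_diag]; ring
  have hu1 : ∀ p : Pr n, (toMat n d u p.1.1 p.1.2 : ℕ) * (x p.1.1 : ℕ) * (x p.1.2 : ℕ)
      = (u p : ℕ) * ((x p.1.1 : ℕ) * (x p.1.2 : ℕ)) := by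
    intro p
    rw [toMat_lt d u p.2, Fin.coe_castLE]
    ring
  have hu2 : ∀ p : Pr n, (toMat n d u p.1.2 p.1.1 : ℕ) * (x p.1.2 : ℕ) * (x p.1.1 : ℕ)
      = (u p : ℕ) * ((x p.1.1 : ℕ) * (x p.1.2 : ℕ)) := by
    intro p
    rw [toMat_gt d u p.2, Fin.coe_castLE]
    ring
  rw [Finset.sum_congr rfl fun i _ => hd i, Finset.sum_congr rfl fun p _ => hu1 p,
    Finset.sum_congr rfl fun p _ => hu2 p]
  ring

/-- `φ_A(x) conj(φ_A(w))` in closed form. -/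
lemma phi_pair (A : Matrix (Fin n) (Fin n) (Fin 4)) (x w : Bits n) :
    phiEq A x * (starRingEnd ℂ) (phiEq A w)
      = Complex.I ^ quadA A x * (-Complex.I) ^ quadA A w / 2 ^ n := by
  unfold phiEq
  have hsr : (starRingEnd ℂ) ((Real.sqrt (2 ^ n) : ℝ) : ℂ) = ((Real.sqrt (2 ^ n) : ℝ) : ℂ) :=
    Complex.conj_ofReal _
  rw [map_div₀, map_pow, Complex.conj_I, hsr, div_mul_div_comm]
  congr 1
  rw [← Complex.ofReal_mul, Real.mul_self_sqrt (by positivity)]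
  push_cast
  ring

lemma kron2_outer_apply (A : Matrix (Fin n) (Fin n) (Fin 4)) (x y w s : Bits n) :
    kron2 (outer (phiEq A)) (x, y) (w, s)
      = Complex.I ^ (quadA A x + quadA A y) * (-Complex.I) ^ (quadA A w + quadA A s) / 4 ^ n := by
  show (phiEq A x * (starRingEnd ℂ) (phiEq A w)) * (phiEq A y * (starRingEnd ℂ) (phiEq A s))
      = _
  rw [phi_pair, phi_pair, div_mul_div_comm, pow_add, pow_add]
  rw [show ((2 : ℂ) ^ n) * 2 ^ n = 4 ^ n by rw [← mul_pow]; norm_num]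
  ring_nf

/-- Diagonal character sum. -/
lemma Dsum (α β : ℕ) (hα : α ≤ 2) (hβ : β ≤ 2) :
    (∑ a : Fin 4, Complex.I ^ ((a : ℕ) * α) * (-Complex.I) ^ ((a : ℕ) * β))
      = if α = β then 4 else 0 := by
  rw [Fin.sum_univ_four]
  simp only [show ((0 : Fin 4) : ℕ) = 0 from rfl, show ((1 : Fin 4) : ℕ) = 1 from rfl,
    show ((2 : Fin 4) : ℕ) = 2 from rfl, show ((3 : Fin 4) : ℕ) = 3 from rfl]
  interval_cases α <;> interval_cases β <;>
    norm_num [pow_succ, Complex.I_mul_I]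

/-- Off-diagonal character sum. -/
lemma Osum (t : ℕ) :
    (∑ b : Fin 2, (-1 : ℂ) ^ ((b : ℕ) * t)) = if Even t then 2 else 0 := by
  rw [Fin.sum_univ_two]
  simp only [show ((0 : Fin 2) : ℕ) = 0 from rfl, show ((1 : Fin 2) : ℕ) = 1 from rfl,
    zero_mul, one_mul, pow_zero]
  by_cases ht : Even t
  · rw [if_pos ht, ht.neg_one_pow]; norm_num
  · rw [if_neg ht, (Nat.not_even_iff_odd.mp ht).neg_one_pow]; norm_num

lemma prod_ite_zero {ι : Type*} [Fintype ι] (p : ι → Prop) [DecidablePred p] (c : ℂ) :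
    (∏ i : ι, if p i then c else 0)
      = if ∀ i, p i then c ^ Fintype.card ι else 0 := by
  split_ifs with h
  · rw [Finset.prod_congr rfl fun i _ => if_pos (h i)]
    simp [Finset.card_univ]
  · push_neg at h
    obtain ⟨i, hpi⟩ := h
    exact Finset.prod_eq_zero (mem_univ i) (if_neg hpi)

lemma per_site (a b c e : Fin 2) (h : (a : ℕ) * a + b * b = (c : ℕ) * c + e * e) :
    (c = a ∧ e = b) ∨ (c = b ∧ e = a) := by
  revert h
  revert a b c e
  decide

lemma no_mixed (a b a' b' : Fin 2) (h : a ≠ b) (h' : a' ≠ b') :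
    ¬ Even ((a : ℕ) * a' + (b : ℕ) * b' + (a : ℕ) * b' + (b : ℕ) * a') := by
  revert h h'
  revert a b a' b'
  decide

/-- Combinatorial characterization of the nonvanishing character sums. -/
lemma key_iff (x y w s : Bits n) :
    ((∀ i, (x i : ℕ) * (x i : ℕ) + (y i : ℕ) * (y i : ℕ)
          = (w i : ℕ) * (w i : ℕ) + (s i : ℕ) * (s i : ℕ)) ∧
      ∀ p : Pr n, Even ((x p.1.1 : ℕ) * (x p.1.2 : ℕ) + (y p.1.1 : ℕ) * (y p.1.2 : ℕ)
          + (w p.1.1 : ℕ) * (w p.1.2 : ℕ) + (s p.1.1 : ℕ) * (s p.1.2 : ℕ)))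
    ↔ ((w = x ∧ s = y) ∨ (w = y ∧ s = x)) := by
  constructor
  · rintro ⟨hdiag, hoff⟩
    have hpair : ∀ i, (w i = x i ∧ s i = y i) ∨ (w i = y i ∧ s i = x i) :=
      fun i => per_site (x i) (y i) (w i) (s i) (hdiag i)
    by_cases hxy : x = y
    · subst hxy
      left
      have hw : ∀ i, w i = x i ∧ s i = x i := by
        intro i; rcases hpair i with ⟨h1, h2⟩ | ⟨h1, h2⟩ <;> exact ⟨h1, h2⟩
      exact ⟨funext fun i => (hw i).1, funext fun i => (hw i).2⟩
    · have hex : ∃ i0, x i0 ≠ y i0 := by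
        by_contra hc
        push_neg at hc
        exact hxy (funext hc)
      obtain ⟨i0, hi0⟩ := hex
      have hcons : ∀ j, x j ≠ y j → i0 ≠ j →
          ¬ ((w i0 = x i0 ∧ s i0 = y i0) ∧ (w j = y j ∧ s j = x j)) ∧
          ¬ ((w i0 = y i0 ∧ s i0 = x i0) ∧ (w j = x j ∧ s j = y j)) := by
        intro j hj hne
        rcases hne.lt_or_gt with hlt | hlt
        · have hp := hoff ⟨(i0, j), hlt⟩
          simp only at hp
          constructor
          · rintro ⟨⟨e1, e2⟩, ⟨e3, e4⟩⟩
            rw [e1, e2, e3, e4] at hp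
            exact no_mixed (x i0) (y i0) (x j) (y j) hi0 hj (by convert hp using 1 <;> ring)
          · rintro ⟨⟨e1, e2⟩, ⟨e3, e4⟩⟩
            rw [e1, e2, e3, e4] at hp
            exact no_mixed (y i0) (x i0) (x j) (y j) (Ne.symm hi0) hj
              (by convert hp using 1 <;> ring)
        · have hp := hoff ⟨(j, i0), hlt⟩
          simp only at hp
          constructor
          · rintro ⟨⟨e1, e2⟩, ⟨e3, e4⟩⟩
            rw [e1, e2, e3, e4] at hp
            exact no_mixed (x j) (y j) (x i0) (y i0) hj hi0 (by convert hp using 1 <;> ring)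
          · rintro ⟨⟨e1, e2⟩, ⟨e3, e4⟩⟩
            rw [e1, e2, e3, e4] at hp
            exact no_mixed (x j) (y j) (y i0) (x i0) hj (Ne.symm hi0)
              (by convert hp using 1 <;> ring)
      rcases hpair i0 with h0 | h0
      · left
        have hw : ∀ j, w j = x j ∧ s j = y j := by
          intro j
          by_cases hj : x j = y j
          · rcases hpair j with h | h
            · exact h
            · exact ⟨h.1.trans hj.symm, h.2.trans hj⟩
          · by_cases hne : i0 = j
            · subst hne; exact h0
            · rcases hpair j with h | h
              · exact h
              · exact absurd ⟨h0, h⟩ (hcons j hj hne).1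
        exact ⟨funext fun j => (hw j).1, funext fun j => (hw j).2⟩
      · right
        have hw : ∀ j, w j = y j ∧ s j = x j := by
          intro j
          by_cases hj : x j = y j
          · rcases hpair j with h | h
            · exact ⟨h.1.trans hj, h.2.trans hj.symm⟩
            · exact h
          · by_cases hne : i0 = j
            · subst hne; exact h0
            · rcases hpair j with h | h
              · exact absurd ⟨h0, h⟩ (hcons j hj hne).2
              · exact h
        exact ⟨funext fun j => (hw j).1, funext fun j => (hw j).2⟩
  · rintro (⟨hw, hs⟩ | ⟨hw, hs⟩)
    · refine ⟨fun i => by rw [hw, hs], fun p => ?_⟩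
      rw [hw, hs]
      exact ⟨(x p.1.1 : ℕ) * (x p.1.2 : ℕ) + (y p.1.1 : ℕ) * (y p.1.2 : ℕ), by ring⟩
    · refine ⟨fun i => by rw [hw, hs]; ring, fun p => ?_⟩
      rw [hw, hs]
      exact ⟨(x p.1.1 : ℕ) * (x p.1.2 : ℕ) + (y p.1.1 : ℕ) * (y p.1.2 : ℕ), by ring⟩

lemma sq_le_two (a b : Fin 2) : (a : ℕ) * (a : ℕ) + (b : ℕ) * (b : ℕ) ≤ 2 :=
  (by decide : ∀ a b : Fin 2, (a : ℕ) * (a : ℕ) + (b : ℕ) * (b : ℕ) ≤ 2) a b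

/-- The central character-sum computation. -/
lemma char_sum (x y w s : Bits n) :
    (∑ A ∈ An n, Complex.I ^ (quadA A x + quadA A y)
        * (-Complex.I) ^ (quadA A w + quadA A s))
      = if (w = x ∧ s = y) ∨ (w = y ∧ s = x)
          then (4 : ℂ) ^ n * 2 ^ Fintype.card (Pr n) else 0 := by
  classical
  rw [sum_An]
  set κ : Fin n → ℕ := fun i => (x i : ℕ) * (x i : ℕ) + (y i : ℕ) * (y i : ℕ) with hκ
  set lam : Fin n → ℕ := fun i => (w i : ℕ) * (w i : ℕ) + (s i : ℕ) * (s i : ℕ) with hlam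
  set τ : Pr n → ℕ := fun p => (x p.1.1 : ℕ) * (x p.1.2 : ℕ) + (y p.1.1 : ℕ) * (y p.1.2 : ℕ)
      + (w p.1.1 : ℕ) * (w p.1.2 : ℕ) + (s p.1.1 : ℕ) * (s p.1.2 : ℕ) with hτ
  have hsummand : ∀ (d : Fin n → Fin 4) (u : Pr n → Fin 2),
      Complex.I ^ (quadA (toMat n d u) x + quadA (toMat n d u) y)
          * (-Complex.I) ^ (quadA (toMat n d u) w + quadA (toMat n d u) s)
        = (∏ i, Complex.I ^ ((d i : ℕ) * κ i) * (-Complex.I) ^ ((d i : ℕ) * lam i))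
          * ∏ p : Pr n, (-1 : ℂ) ^ ((u p : ℕ) * τ p) := by
    intro d u
    rw [quadA_toMat, quadA_toMat, quadA_toMat, quadA_toMat]
    have hx : (∑ i, (d i : ℕ) * ((x i : ℕ) * (x i : ℕ))
          + 2 * ∑ p : Pr n, (u p : ℕ) * ((x p.1.1 : ℕ) * (x p.1.2 : ℕ)))
        + (∑ i, (d i : ℕ) * ((y i : ℕ) * (y i : ℕ))
          + 2 * ∑ p : Pr n, (u p : ℕ) * ((y p.1.1 : ℕ) * (y p.1.2 : ℕ)))
        = (∑ i, (d i : ℕ) * κ i)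
          + 2 * (∑ p : Pr n, (u p : ℕ) * ((x p.1.1 : ℕ) * (x p.1.2 : ℕ))
            + ∑ p : Pr n, (u p : ℕ) * ((y p.1.1 : ℕ) * (y p.1.2 : ℕ))) := by
      rw [hκ]
      simp only [mul_add]
      rw [Finset.sum_add_distrib]
      ring
    have hws : (∑ i, (d i : ℕ) * ((w i : ℕ) * (w i : ℕ))
          + 2 * ∑ p : Pr n, (u p : ℕ) * ((w p.1.1 : ℕ) * (w p.1.2 : ℕ)))
        + (∑ i, (d i : ℕ) * ((s i : ℕ) * (s i : ℕ))
          + 2 * ∑ p : Pr n, (u p : ℕ) * ((s p.1.1 : ℕ) * (s p.1.2 : ℕ)))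
        = (∑ i, (d i : ℕ) * lam i)
          + 2 * (∑ p : Pr n, (u p : ℕ) * ((w p.1.1 : ℕ) * (w p.1.2 : ℕ))
            + ∑ p : Pr n, (u p : ℕ) * ((s p.1.1 : ℕ) * (s p.1.2 : ℕ))) := by
      rw [hlam]
      simp only [mul_add]
      rw [Finset.sum_add_distrib]
      ring
    rw [hx, hws]
    rw [pow_add, pow_add, pow_mul, pow_mul, Complex.I_sq,
      show ((-Complex.I) ^ 2 = (-1 : ℂ)) from by rw [neg_pow, Complex.I_sq]; ring]
    rw [Finset.prod_mul_distrib,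
      Finset.prod_pow_eq_pow_sum univ (fun i => (d i : ℕ) * κ i) Complex.I,
      Finset.prod_pow_eq_pow_sum univ (fun i => (d i : ℕ) * lam i) (-Complex.I),
      Finset.prod_pow_eq_pow_sum univ (fun p => (u p : ℕ) * τ p) (-1 : ℂ)]
    have hτsum : ((∑ p : Pr n, (u p : ℕ) * ((x p.1.1 : ℕ) * (x p.1.2 : ℕ)))
            + ∑ p : Pr n, (u p : ℕ) * ((y p.1.1 : ℕ) * (y p.1.2 : ℕ)))
          + ((∑ p : Pr n, (u p : ℕ) * ((w p.1.1 : ℕ) * (w p.1.2 : ℕ)))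
            + ∑ p : Pr n, (u p : ℕ) * ((s p.1.1 : ℕ) * (s p.1.2 : ℕ)))
        = ∑ p : Pr n, (u p : ℕ) * τ p := by
      rw [hτ]
      simp only [mul_add]
      rw [Finset.sum_add_distrib, Finset.sum_add_distrib, Finset.sum_add_distrib]
      ring
    rw [← hτsum, pow_add, pow_add]
    ring
  rw [Finset.sum_congr rfl fun d _ => Finset.sum_congr rfl fun u _ => hsummand d u]
  rw [← Finset.sum_mul_sum]
  have hD : (∑ d : Fin n → Fin 4,
        ∏ i, Complex.I ^ ((d i : ℕ) * κ i) * (-Complex.I) ^ ((d i : ℕ) * lam i))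
      = if ∀ i, κ i = lam i then (4 : ℂ) ^ n else 0 := by
    rw [← Fintype.prod_sum (fun i (a : Fin 4) =>
      Complex.I ^ ((a : ℕ) * κ i) * (-Complex.I) ^ ((a : ℕ) * lam i))]
    rw [Finset.prod_congr rfl fun i _ =>
      Dsum (κ i) (lam i) (sq_le_two (x i) (y i)) (sq_le_two (w i) (s i))]
    rw [prod_ite_zero (fun i => κ i = lam i) 4, Fintype.card_fin]
    split_ifs <;> rfl
  have hO : (∑ u : Pr n → Fin 2, ∏ p : Pr n, (-1 : ℂ) ^ ((u p : ℕ) * τ p))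
      = if ∀ p : Pr n, Even (τ p) then (2 : ℂ) ^ Fintype.card (Pr n) else 0 := by
    rw [← Fintype.prod_sum (fun p (b : Fin 2) => (-1 : ℂ) ^ ((b : ℕ) * τ p))]
    rw [Finset.prod_congr rfl fun p _ => Osum (τ p)]
    rw [prod_ite_zero (fun p : Pr n => Even (τ p)) 2]
  rw [hD, hO]
  have hiff : ((∀ i, κ i = lam i) ∧ ∀ p : Pr n, Even (τ p))
      ↔ ((w = x ∧ s = y) ∨ (w = y ∧ s = x)) := key_iff x y w s
  by_cases hc : (w = x ∧ s = y) ∨ (w = y ∧ s = x)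
  · rw [if_pos hc]
    obtain ⟨hk, he⟩ := hiff.mpr hc
    rw [if_pos hk, if_pos he]
  · rw [if_neg hc]
    by_cases hk : ∀ i, κ i = lam i
    · by_cases he : ∀ p : Pr n, Even (τ p)
      · exact absurd (hiff.mp ⟨hk, he⟩) hc
      · rw [if_neg he, mul_zero]
    · rw [if_neg hk, zero_mul]

end Espovm

namespace Espovm

lemma one_entry (x y w s : Bits n) :
    (1 : Matrix (Bits n × Bits n) (Bits n × Bits n) ℂ) (x, y) (w, s)
      = if w = x ∧ s = y then 1 else 0 := by
  rw [Matrix.one_apply]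
  simp [Prod.ext_iff, eq_comm, and_comm]

lemma swap_entry (x y w s : Bits n) :
    (∑ a : Bits n, ∑ b : Bits n, Matrix.single (a, b) (b, a) (1:ℂ)) (x, y) (w, s)
      = if w = y ∧ s = x then 1 else 0 := by
  simp only [Matrix.sum_apply, Matrix.single, Matrix.of_apply, Prod.mk.injEq]
  by_cases h1 : w = y <;> by_cases h2 : s = x <;>
    simp [h1, h2, ite_and, Finset.sum_ite_eq, Finset.sum_ite_eq'] <;>
    (try simp [eq_comm, h1, h2]) <;> (try tauto)

lemma diag_entry (x y w s : Bits n) :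
    (∑ a : Bits n, Matrix.single (a, a) (a, a) (1:ℂ)) (x, y) (w, s)
      = if y = x ∧ w = x ∧ s = x then 1 else 0 := by
  simp only [Matrix.sum_apply, Matrix.single, Matrix.of_apply, Prod.mk.injEq]
  by_cases h1 : y = x <;> by_cases h2 : w = x <;> by_cases h3 : s = x <;>
    simp [h1, h2, h3, ite_and, Finset.sum_ite_eq, Finset.sum_ite_eq'] <;>
    (try simp [eq_comm, h1, h2, h3]) <;> (try tauto)

end Espovm

set_option maxHeartbeats 1000000 in
open Espovm in
/-- second moment of the complex equatorial stabilizer ensemble. -/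
theorem espovm_second_moment (n : ℕ) (hn : 1 ≤ n) :
    (((An n).card : ℂ))⁻¹ • ∑ A ∈ An n, kron2 (outer (phiEq A)) =
      ((4 : ℂ) ^ n)⁻¹ •
        ((1 : Matrix (Bits n × Bits n) (Bits n × Bits n) ℂ)
          + (∑ x : Bits n, ∑ y : Bits n, Matrix.single (x, y) (y, x) (1 : ℂ))
          - ∑ x : Bits n, Matrix.single (x, x) (x, x) (1 : ℂ)) := by
  ext ⟨x, y⟩ ⟨w, s⟩
  have h4 : ((4 : ℂ) ^ n) ≠ 0 := pow_ne_zero _ (by norm_num)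
  have h2m : ((2 : ℂ) ^ Fintype.card (Pr n)) ≠ 0 := pow_ne_zero _ (by norm_num)
  have hL : ((((An n).card : ℂ))⁻¹ • ∑ A ∈ An n, kron2 (outer (phiEq A))) (x, y) (w, s)
      = (((An n).card : ℂ))⁻¹ * ∑ A ∈ An n, kron2 (outer (phiEq A)) (x, y) (w, s) := by
    simp [Matrix.sum_apply]
  rw [hL]
  rw [Finset.sum_congr rfl fun A _ => kron2_outer_apply A x y w s]
  rw [← Finset.sum_div, char_sum, card_An]
  have hone := one_entry x y w s
  have hswap := swap_entry x y w s
  have hdiagm := diag_entry x y w s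
  have hR : (((4 : ℂ) ^ n)⁻¹ •
        ((1 : Matrix (Bits n × Bits n) (Bits n × Bits n) ℂ)
          + (∑ a : Bits n, ∑ b : Bits n, Matrix.single (a, b) (b, a) (1 : ℂ))
          - ∑ a : Bits n, Matrix.single (a, a) (a, a) (1 : ℂ))) (x, y) (w, s)
      = ((4 : ℂ) ^ n)⁻¹ *
          ((if w = x ∧ s = y then 1 else 0) + (if w = y ∧ s = x then 1 else 0)
            - (if y = x ∧ w = x ∧ s = x then 1 else 0)) := by
    simp only [Matrix.smul_apply, Matrix.sub_apply, Matrix.add_apply, hone, hswap, hdiagm,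
      smul_eq_mul]
  rw [hR]
  by_cases h1 : w = x ∧ s = y <;> by_cases h2 : w = y ∧ s = x
  · -- both: x = y and everything equal
    rw [if_pos (Or.inl h1), if_pos h1, if_pos h2]
    have hyx : y = x := h1.2.symm.trans h2.2
    rw [if_pos ⟨hyx, h1.1, h2.2⟩]
    field_simp
    ring
  · rw [if_pos (Or.inl h1), if_pos h1, if_neg h2]
    have hne : ¬ (y = x ∧ w = x ∧ s = x) := by
      rintro ⟨e1, e2, e3⟩
      exact h2 ⟨e2.trans e1.symm, e3⟩
    rw [if_neg hne]
    field_simp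
    ring
  · rw [if_pos (Or.inr h2), if_neg h1, if_pos h2]
    have hne : ¬ (y = x ∧ w = x ∧ s = x) := by
      rintro ⟨e1, e2, e3⟩
      exact h1 ⟨e2, e3.trans e1.symm⟩
    rw [if_neg hne]
    field_simp
    ring
  · rw [if_neg (by tauto), if_neg h1, if_neg h2]
    have hne : ¬ (y = x ∧ w = x ∧ s = x) := by
      rintro ⟨e1, e2, e3⟩
      exact h1 ⟨e2, e3.trans e1.symm⟩
    rw [if_neg hne]
    simp
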